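/- For every θ with 0 ≤ θ < 1/2, the family of expectations E[exp(θ · ((H(p) - p)⁻)² / p)] is bounded for all sufficiently large p; that is, there exist M < ∞ and p₀ > 0 such that for all p ≥ p₀, E[exp(θ · (max(p - H(p), 0))² / p)] ≤ M. -/

import Mathlib

open Real Nat Filter MeasureTheory
open scoped ENNReal


-- core log inequality
lemma my_log_ineq {y p : ℝ} (hy : 0 < y) (hyp : y ≤ p) :
    y * Real.log (p / y) ≤ (p - y) - (p - y)^2 / (2*p) := by
  have hp : 0 < p := lt_of_lt_of_le hy hyp
  set s := Real.log (p / y) with hs_def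
  have hs : 0 ≤ s := Real.log_nonneg (by rw [le_div_iff₀ hy]; linarith)
  have hpe : p = y * Real.exp s := by
    rw [hs_def, Real.exp_log (by positivity)]; field_simp
  have h1 : s ≤ Real.sinh s := Real.self_le_sinh_iff.mpr hs
  have h2 : Real.sinh s = (Real.exp s - (Real.exp s)⁻¹) / 2 := by
    rw [Real.sinh_eq, Real.exp_neg]
  have he : 0 < Real.exp s := Real.exp_pos s
  have key : (y * Real.exp s - y) - (y * Real.exp s - y)^2 / (2*(y*Real.exp s))
      = y * Real.sinh s := by
    rw [h2]; field_simp; ring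
  calc y * s ≤ y * Real.sinh s := mul_le_mul_of_nonneg_left h1 hy.le
  _ = (p - y) - (p - y)^2 / (2*p) := by rw [hpe, key]

lemma my_stirling (n : ℕ) (hn : 1 ≤ n) :
    Real.sqrt (2 * π * n) * ((n : ℝ) / Real.exp 1) ^ n ≤ (n ! : ℝ) := by
  obtain ⟨m, rfl⟩ := Nat.exists_eq_add_of_le hn
  have htend : Filter.Tendsto (Stirling.stirlingSeq ∘ Nat.succ) Filter.atTop (nhds (Real.sqrt π)) := by
    apply Stirling.tendsto_stirlingSeq_sqrt_pi.comp
    exact Filter.tendsto_add_atTop_nat 1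
  have h1 : Real.sqrt π ≤ Stirling.stirlingSeq (1 + m) := by
    have := Stirling.stirlingSeq'_antitone.le_of_tendsto htend m
    simpa [Nat.add_comm] using this
  rw [Stirling.stirlingSeq] at h1
  have hpos : 0 < Real.sqrt (2 * ((1+m:ℕ):ℝ)) * (((1+m : ℕ) : ℝ) / Real.exp 1) ^ (1+m) := by
    positivity
  rw [le_div_iff₀ hpos] at h1
  calc Real.sqrt (2 * π * (1+m:ℕ)) * (((1+m:ℕ):ℝ) / Real.exp 1) ^ (1+m)
      = Real.sqrt π * (Real.sqrt (2 * (1+m:ℕ)) * (((1+m:ℕ):ℝ) / Real.exp 1) ^ (1+m)) := by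
        rw [show 2 * π * ((1+m:ℕ):ℝ) = π * (2 * (1+m:ℕ)) by push_cast; ring,
          Real.sqrt_mul Real.pi_pos.le]
        ring
  _ ≤ ((1+m)! : ℝ) := h1

lemma my_pmf_bound {p : ℝ} {n : ℕ} (hn : 1 ≤ n) (hnp : (n:ℝ) ≤ p) :
    Real.exp (-p) * p ^ n / (n ! : ℝ) ≤
      Real.exp (-(p - n)^2 / (2*p)) / Real.sqrt (2*π*n) := by
  have hnR : (0:ℝ) < n := by exact_mod_cast hn
  have hp : 0 < p := lt_of_lt_of_le hnR hnp
  have hsq : 0 < Real.sqrt (2*π*n) := by positivity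
  have hden : 0 < Real.sqrt (2*π*n) * ((n:ℝ)/Real.exp 1)^n := by positivity
  have step1 : Real.exp (-p) * p ^ n / (n ! : ℝ) ≤
      Real.exp (-p) * p ^ n / (Real.sqrt (2*π*n) * ((n:ℝ)/Real.exp 1)^n) := by
    gcongr
    exact my_stirling n hn
  have e1 : p ^ n = Real.exp (n * Real.log p) := by
    rw [← Real.log_pow, Real.exp_log (by positivity)]
  have e2 : ((n:ℝ)/Real.exp 1)^n = Real.exp ((n:ℝ) * (Real.log n - 1)) := by
    have h : Real.log (((n:ℝ)/Real.exp 1)^n) = (n:ℝ) * (Real.log n - 1) := by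
      rw [Real.log_pow, Real.log_div hnR.ne' (Real.exp_ne_zero 1), Real.log_exp]
    rw [← h, Real.exp_log (by positivity)]
  have hlog := my_log_ineq hnR hnp
  have hlogd : Real.log (p / n) = Real.log p - Real.log n :=
    Real.log_div hp.ne' hnR.ne'
  have hexp : -p + (n:ℝ) * Real.log p - (n:ℝ) * (Real.log n - 1) ≤ -(p - n)^2 / (2*p) := by
    rw [hlogd, mul_sub] at hlog
    have expand : -p + (n:ℝ) * Real.log p - (n:ℝ) * (Real.log n - 1)
        = ((n:ℝ) * Real.log p - (n:ℝ) * Real.log n) + (n:ℝ) - p := by ring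
    rw [expand, neg_div]
    linarith
  have step2 : Real.exp (-p) * p ^ n / (Real.sqrt (2*π*n) * ((n:ℝ)/Real.exp 1)^n)
      = Real.exp (-p + (n:ℝ) * Real.log p - (n:ℝ) * (Real.log n - 1)) / Real.sqrt (2*π*n) := by
    rw [e1, e2, Real.exp_sub, Real.exp_add]
    field_simp
  calc Real.exp (-p) * p ^ n / (n ! : ℝ)
      ≤ Real.exp (-p) * p ^ n / (Real.sqrt (2*π*n) * ((n:ℝ)/Real.exp 1)^n) := step1
  _ = Real.exp (-p + (n:ℝ) * Real.log p - (n:ℝ) * (Real.log n - 1)) / Real.sqrt (2*π*n) := step2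
  _ ≤ Real.exp (-(p - n)^2 / (2*p)) / Real.sqrt (2*π*n) := by
      gcongr

lemma my_gauss_sum {a : ℝ} (ha : 0 < a) (m : ℕ) :
    ∑ i ∈ Finset.range m, Real.exp (-a * ((i:ℝ)+1)^2) ≤ Real.sqrt (π/a) / 2 := by
  have hanti : AntitoneOn (fun x : ℝ => Real.exp (-a * x^2)) (Set.Icc (0:ℝ) (0 + m)) := by
    intro x hx y hy hxy
    dsimp only
    apply Real.exp_le_exp.mpr
    nlinarith [ha.le, mul_self_le_mul_self hx.1 hxy]
  have h1 := hanti.sum_le_integral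
  have h2 : ∑ i ∈ Finset.range m, Real.exp (-a * ((i:ℝ)+1)^2)
      = ∑ i ∈ Finset.range m, (fun x : ℝ => Real.exp (-a * x^2)) ((0:ℝ) + (i + 1 : ℕ)) := by
    apply Finset.sum_congr rfl
    intro i _
    push_cast
    ring_nf
  rw [h2]
  refine le_trans h1 ?_
  have h3 : ∫ x in (0:ℝ)..(0 + m), Real.exp (-a * x^2)
      = ∫ x in Set.Ioc (0:ℝ) (0 + m : ℝ), Real.exp (-a * x^2) :=
    intervalIntegral.integral_of_le (by positivity)
  rw [h3]
  have h4 : ∫ x in Set.Ioc (0:ℝ) ((0 + m : ℝ)), Real.exp (-a * x^2)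
      ≤ ∫ x in Set.Ioi (0:ℝ), Real.exp (-a * x^2) := by
    apply setIntegral_mono_set ((integrable_exp_neg_mul_sq ha).integrableOn)
    · exact ae_of_all _ (fun x => (Real.exp_pos _).le)
    · exact HasSubset.Subset.eventuallyLE Set.Ioc_subset_Ioi_self
  refine le_trans h4 ?_
  rw [integral_gaussian_Ioi]

-- Gaussian bound without the sqrt factor, valid also for n = 0
lemma my_pmf_bound' {p : ℝ} {n : ℕ} (hp : 0 < p) (hnp : (n:ℝ) ≤ p) :
    Real.exp (-p) * p ^ n / (n ! : ℝ) ≤ Real.exp (-(p - n)^2 / (2*p)) := by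
  rcases Nat.eq_zero_or_pos n with rfl | hn
  · simp only [pow_zero, Nat.factorial_zero, Nat.cast_one, mul_one, div_one, Nat.cast_zero]
    apply Real.exp_le_exp.mpr
    rw [sub_zero, neg_div]
    have : p^2/(2*p) = p/2 := by field_simp
    rw [this]; linarith
  · refine le_trans (my_pmf_bound hn hnp) ?_
    have h1 : 1 ≤ Real.sqrt (2*π*n) := by
      apply Real.one_le_sqrt.mpr
      have hn1 : (1:ℝ) ≤ (n:ℝ) := by exact_mod_cast hn
      nlinarith [Real.pi_gt_three]
    calc Real.exp (-(p - n)^2 / (2*p)) / Real.sqrt (2*π*n)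
        ≤ Real.exp (-(p - n)^2 / (2*p)) / 1 := by
          gcongr
    _ = Real.exp (-(p - n)^2 / (2*p)) := div_one _

lemma my_pmf_sum {p : ℝ} (hp : 0 < p) :
    ∑' n : ℕ, ENNReal.ofReal (Real.exp (-p) * p ^ n / (n ! : ℝ)) = 1 := by
  have h := ProbabilityTheory.poissonPMFRealSum p.toNNReal
  unfold ProbabilityTheory.poissonPMFReal at h
  rw [Real.coe_toNNReal p hp.le] at h
  rw [← ENNReal.ofReal_tsum_of_nonneg (fun n => by positivity) h.summable, h.tsum_eq,
    ENNReal.ofReal_one]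

set_option maxHeartbeats 1000000 in
/-- For `H(p)` a Poisson random variable with mean `p` (so `P(H(p) = n) = e^{-p} p^n / n!`),
and `0 ≤ θ < 1/2`, the expectations `E[exp(θ ((H(p) - p)⁻)² / p)]` are bounded for all
sufficiently large `p`: there exist `M < ∞` and `p₀ > 0` with
`E[exp(θ (max(p - H(p), 0))² / p)] ≤ M` for all `p ≥ p₀`. -/
theorem poisson_negative_part_sq_exp_moment_bounded (θ : ℝ) (hθ0 : 0 ≤ θ) (hθ : θ < 1 / 2) :
    ∃ M : ℝ, ∃ p₀ > (0 : ℝ), ∀ p : ℝ, p₀ ≤ p →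
      (∑' n : ℕ, ENNReal.ofReal (Real.exp (-p) * p ^ n / (Nat.factorial n : ℝ) *
        Real.exp (θ * (max (p - (n : ℝ)) 0) ^ 2 / p))) ≤ ENNReal.ofReal M := by
  set c : ℝ := 1/2 - θ with hc_def
  have hc : 0 < c := by rw [hc_def]; linarith
  -- the polynomial-times-exponential term tends to zero
  have htend : Tendsto (fun p : ℝ => (p/2+1) * Real.exp (-(c*p/4))) atTop (nhds 0) := by
    have h0 : Tendsto (fun x : ℝ => x ^ 1 * Real.exp (-x)) atTop (nhds 0) :=
      tendsto_pow_mul_exp_neg_atTop_nhds_zero 1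
    have h1 : Tendsto (fun p : ℝ => c*p/4) atTop atTop := by
      apply Tendsto.atTop_div_const (by norm_num : (0:ℝ) < 4)
      exact Filter.tendsto_id.const_mul_atTop hc
    have h2 : Tendsto (fun x : ℝ => Real.exp (-x)) atTop (nhds 0) :=
      Real.tendsto_exp_neg_atTop_nhds_zero
    have h3 := ((h0.comp h1).const_mul (2/c)).add (h2.comp h1)
    simp only [mul_zero, add_zero, zero_add] at h3
    apply h3.congr
    intro p
    simp only [Function.comp_apply, pow_one]
    field_simp
    ring
  obtain ⟨P, hP⟩ := eventually_atTop.mp (htend.eventually_le_const (by norm_num : (0:ℝ) < 1))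
  refine ⟨3 + 1/(2*Real.sqrt c), max 1 P, lt_of_lt_of_le one_pos (le_max_left _ _), ?_⟩
  intro p hp
  have hp1 : 1 ≤ p := le_trans (le_max_left 1 P) hp
  have hpP : P ≤ p := le_trans (le_max_right 1 P) hp
  have hp0 : 0 < p := lt_of_lt_of_le one_pos hp1
  set N := ⌈p⌉₊ with hN_def
  have hpN : p ≤ N := Nat.le_ceil p
  have hN1 : 1 ≤ N := Nat.one_le_ceil_iff.mpr hp0
  have hNp : ((N:ℝ) - 1) ≤ p := by
    have := Nat.ceil_lt_add_one hp0.le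
    linarith
  set K := ⌈p/2⌉₊ with hK_def
  have hK : (K:ℝ) ≤ p/2 + 1 := le_of_lt (Nat.ceil_lt_add_one (by positivity))
  set u : ℕ → ℝ≥0∞ := fun n => ENNReal.ofReal (Real.exp (-p) * p ^ n / (n ! : ℝ)) with hu_def
  set v : ℕ → ℝ≥0∞ := fun n => if (n:ℝ) < p ∧ p/2 ≤ (n:ℝ) then
      ENNReal.ofReal ((1/Real.sqrt (π*p)) * Real.exp (-(c/p) * ((N-1-n : ℕ):ℝ)^2)) else 0
      with hv_def
  set w : ℕ → ℝ≥0∞ := fun n => if (n:ℝ) < p/2 then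
      ENNReal.ofReal (Real.exp (-(c*p/4))) else 0 with hw_def
  -- termwise bound
  have hterm : ∀ n : ℕ, ENNReal.ofReal (Real.exp (-p) * p ^ n / (n ! : ℝ) *
      Real.exp (θ * (max (p - (n : ℝ)) 0) ^ 2 / p)) ≤ u n + v n + w n := by
    intro n
    rcases le_or_gt p (n:ℝ) with h | h
    · have hmax : max (p - (n:ℝ)) 0 = 0 := max_eq_right (by linarith)
      rw [hmax]
      have hz : θ * (0:ℝ)^2 / p = 0 := by norm_num
      rw [hz, Real.exp_zero, mul_one]
      exact le_trans (le_self_add : u n ≤ u n + v n) le_self_add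
    · have hmax : max (p - (n:ℝ)) 0 = p - n := max_eq_left (by linarith)
      rw [hmax]
      rcases lt_or_ge (n:ℝ) (p/2) with h2 | h2
      · -- small n : use the crude Gaussian bound
        have h3 := my_pmf_bound' hp0 h.le
        have hb : Real.exp (-p) * p ^ n / (n ! : ℝ) * Real.exp (θ * (p - n)^2 / p)
            ≤ Real.exp (-(c*p/4)) := by
          calc Real.exp (-p) * p ^ n / (n ! : ℝ) * Real.exp (θ * (p - n)^2 / p)
              ≤ Real.exp (-(p - n)^2 / (2*p)) * Real.exp (θ * (p - n)^2 / p) := by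
                gcongr
          _ = Real.exp (-(p - n)^2 / (2*p) + θ * (p - n)^2 / p) := (Real.exp_add _ _).symm
          _ ≤ Real.exp (-(c*p/4)) := by
                apply Real.exp_le_exp.mpr
                have he : -(p - n)^2 / (2*p) + θ * (p - n)^2 / p = -((c/p) * (p - n)^2) := by
                  rw [hc_def]
                  field_simp
                  ring
                rw [he]
                have h4 : p/2 ≤ p - n := by linarith
                have h5 : c*p/4 ≤ (c/p) * (p - n)^2 := by
                  have h6 : (p/2)^2 ≤ (p - n)^2 := by nlinarith
                  have h7 : (c/p) * (p/2)^2 = c*p/4 := by field_simp; ring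
                  rw [← h7]
                  apply mul_le_mul_of_nonneg_left h6 (by positivity)
                linarith
        have hw : ENNReal.ofReal (Real.exp (-(c*p/4))) = w n := by
          rw [hw_def]
          simp only
          rw [if_pos h2]
        calc ENNReal.ofReal (Real.exp (-p) * p ^ n / (n ! : ℝ) * Real.exp (θ * (p - n)^2 / p))
            ≤ ENNReal.ofReal (Real.exp (-(c*p/4))) := ENNReal.ofReal_le_ofReal hb
        _ = w n := hw
        _ ≤ u n + v n + w n := le_add_self
      · -- p/2 ≤ n < p : Stirling-based bound
        have hn1 : 1 ≤ n := by
          rcases Nat.eq_zero_or_pos n with rfl | h' 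
          · simp only [Nat.cast_zero] at h2
            linarith
          · exact h'
        have hnN : n < N := Nat.lt_ceil.mpr h
        have hnle : n ≤ N - 1 := by omega
        have hcast : ((N - 1 - n : ℕ):ℝ) = (N:ℝ) - 1 - n := by
          rw [Nat.cast_sub hnle, Nat.cast_sub hN1]
          norm_num
        have hj : ((N - 1 - n : ℕ):ℝ) ≤ p - n := by
          rw [hcast]
          linarith [hNp]
        have hj0 : (0:ℝ) ≤ ((N - 1 - n : ℕ):ℝ) := Nat.cast_nonneg _
        have h3 := my_pmf_bound hn1 h.le
        have h4 : Real.sqrt (π*p) ≤ Real.sqrt (2*π*(n:ℝ)) := by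
          apply Real.sqrt_le_sqrt
          nlinarith [Real.pi_pos]
        have hb : Real.exp (-p) * p ^ n / (n ! : ℝ) * Real.exp (θ * (p - n)^2 / p)
            ≤ (1/Real.sqrt (π*p)) * Real.exp (-(c/p) * ((N-1-n : ℕ):ℝ)^2) := by
          calc Real.exp (-p) * p ^ n / (n ! : ℝ) * Real.exp (θ * (p - n)^2 / p)
              ≤ (Real.exp (-(p - n)^2 / (2*p)) / Real.sqrt (2*π*(n:ℝ)))
                  * Real.exp (θ * (p - n)^2 / p) := by gcongr
          _ ≤ (Real.exp (-(p - n)^2 / (2*p)) / Real.sqrt (π*p))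
                  * Real.exp (θ * (p - n)^2 / p) := by
                gcongr
          _ = (1/Real.sqrt (π*p)) * Real.exp (-(p - n)^2 / (2*p) + θ * (p - n)^2 / p) := by
                rw [Real.exp_add]
                ring
          _ ≤ (1/Real.sqrt (π*p)) * Real.exp (-(c/p) * ((N-1-n : ℕ):ℝ)^2) := by
                gcongr
                have he : -(p - n)^2 / (2*p) + θ * (p - n)^2 / p = -((c/p) * (p - n)^2) := by
                  rw [hc_def]
                  field_simp
                  ring
                rw [he]
                have h6 : ((N-1-n : ℕ):ℝ)^2 ≤ (p - n)^2 := by nlinarith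
                have h7 : (c/p) * ((N-1-n : ℕ):ℝ)^2 ≤ (c/p) * (p - n)^2 :=
                  mul_le_mul_of_nonneg_left h6 (by positivity)
                linarith
        have hv : ENNReal.ofReal ((1/Real.sqrt (π*p)) * Real.exp (-(c/p) * ((N-1-n : ℕ):ℝ)^2))
            = v n := by
          rw [hv_def]
          simp only
          rw [if_pos ⟨h, h2⟩]
        calc ENNReal.ofReal (Real.exp (-p) * p ^ n / (n ! : ℝ) * Real.exp (θ * (p - n)^2 / p))
            ≤ ENNReal.ofReal ((1/Real.sqrt (π*p)) * Real.exp (-(c/p) * ((N-1-n : ℕ):ℝ)^2)) :=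
              ENNReal.ofReal_le_ofReal hb
        _ = v n := hv
        _ ≤ u n + v n + w n := le_trans le_add_self le_self_add
  have Su : ∑' n, u n = 1 := my_pmf_sum hp0
  have Sv : ∑' n, v n ≤ ENNReal.ofReal (1 + 1/(2*Real.sqrt c)) := by
    have hsupp : ∀ n ∉ Finset.range N, v n = 0 := by
      intro n hn
      rw [Finset.mem_range, not_lt] at hn
      have : ¬ ((n:ℝ) < p) := by
        push_neg
        calc p ≤ (N:ℝ) := hpN
        _ ≤ (n:ℝ) := by exact_mod_cast hn
      rw [hv_def]
      simp only
      rw [if_neg (by tauto)]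
    rw [tsum_eq_sum hsupp]
    have step1 : ∑ n ∈ Finset.range N, v n ≤ ∑ n ∈ Finset.range N,
        ENNReal.ofReal ((1/Real.sqrt (π*p)) * Real.exp (-(c/p) * ((N-1-n : ℕ):ℝ)^2)) := by
      apply Finset.sum_le_sum
      intro n _
      rw [hv_def]
      simp only
      split_ifs
      · exact le_rfl
      · exact _root_.zero_le
    refine le_trans step1 ?_
    rw [← ENNReal.ofReal_sum_of_nonneg (fun n _ => by positivity)]
    apply ENNReal.ofReal_le_ofReal
    rw [← Finset.mul_sum]
    have hrefl : ∑ n ∈ Finset.range N, Real.exp (-(c/p) * ((N-1-n : ℕ):ℝ)^2)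
        = ∑ j ∈ Finset.range N, Real.exp (-(c/p) * ((j : ℕ):ℝ)^2) :=
      Finset.sum_range_reflect (fun j => Real.exp (-(c/p) * ((j : ℕ):ℝ)^2)) N
    rw [hrefl]
    obtain ⟨m, hm⟩ : ∃ m, N = m + 1 := ⟨N - 1, (Nat.succ_pred_eq_of_pos hN1).symm⟩
    rw [hm, Finset.sum_range_succ']
    have hgauss : ∑ i ∈ Finset.range m, Real.exp (-(c/p) * (((i+1 : ℕ)):ℝ)^2)
        ≤ Real.sqrt (π/(c/p)) / 2 := by
      have := my_gauss_sum (div_pos hc hp0) m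
      refine le_trans (le_of_eq ?_) this
      apply Finset.sum_congr rfl
      intro i _
      push_cast
      ring_nf
    have hf0 : Real.exp (-(c/p) * (((0:ℕ)):ℝ)^2) = 1 := by norm_num
    have hsq : Real.sqrt (π/(c/p)) = Real.sqrt (π*p) / Real.sqrt c := by
      rw [show π/(c/p) = (π*p)/c by field_simp]
      exact Real.sqrt_div (by positivity) c
    have hsp : 1 ≤ Real.sqrt (π*p) := by
      apply Real.one_le_sqrt.mpr
      nlinarith [Real.pi_gt_three]
    have hsc : 0 < Real.sqrt c := Real.sqrt_pos.mpr hc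
    calc 1/Real.sqrt (π*p) * (∑ i ∈ Finset.range m,
          Real.exp (-(c/p) * (((i+1 : ℕ)):ℝ)^2) + Real.exp (-(c/p) * (((0:ℕ)):ℝ)^2))
        ≤ 1/Real.sqrt (π*p) * (Real.sqrt (π*p) / Real.sqrt c / 2 + 1) := by
          rw [hf0, ← hsq]
          gcongr
    _ = 1/(2*Real.sqrt c) + 1/Real.sqrt (π*p) := by
          field_simp
    _ ≤ 1 + 1/(2*Real.sqrt c) := by
          have : 1/Real.sqrt (π*p) ≤ 1 := by
            rw [div_le_one (by positivity)]
            exact hsp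
          linarith
  have Sw : ∑' n, w n ≤ ENNReal.ofReal 1 := by
    have hsupp : ∀ n ∉ Finset.range K, w n = 0 := by
      intro n hn
      rw [Finset.mem_range] at hn
      rw [hw_def]
      simp only
      rw [if_neg]
      intro hlt
      exact hn (Nat.lt_ceil.mpr hlt)
    rw [tsum_eq_sum hsupp]
    calc ∑ n ∈ Finset.range K, w n
        ≤ ∑ _n ∈ Finset.range K, ENNReal.ofReal (Real.exp (-(c*p/4))) := by
          apply Finset.sum_le_sum
          intro n _
          rw [hw_def]
          simp only
          split_ifs
          · exact le_rfl
          · exact _root_.zero_le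
    _ = (K : ℝ≥0∞) * ENNReal.ofReal (Real.exp (-(c*p/4))) := by
          rw [Finset.sum_const, Finset.card_range, nsmul_eq_mul]
    _ = ENNReal.ofReal ((K:ℝ) * Real.exp (-(c*p/4))) := by
          rw [← ENNReal.ofReal_natCast K, ← ENNReal.ofReal_mul (Nat.cast_nonneg K)]
    _ ≤ ENNReal.ofReal 1 := by
          apply ENNReal.ofReal_le_ofReal
          calc (K:ℝ) * Real.exp (-(c*p/4)) ≤ (p/2+1) * Real.exp (-(c*p/4)) := by
                gcongr
          _ ≤ 1 := hP p hpP
  calc (∑' n : ℕ, ENNReal.ofReal (Real.exp (-p) * p ^ n / (n ! : ℝ) *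
        Real.exp (θ * (max (p - (n : ℝ)) 0) ^ 2 / p)))
      ≤ ∑' n, (u n + v n + w n) := ENNReal.tsum_le_tsum hterm
  _ = (∑' n, u n) + (∑' n, v n) + (∑' n, w n) := by
      rw [ENNReal.tsum_add, ENNReal.tsum_add]
  _ ≤ 1 + ENNReal.ofReal (1 + 1/(2*Real.sqrt c)) + ENNReal.ofReal 1 := by
      exact add_le_add (add_le_add Su.le Sv) Sw
  _ = ENNReal.ofReal (3 + 1/(2*Real.sqrt c)) := by
      rw [← ENNReal.ofReal_one, ← ENNReal.ofReal_add (by norm_num) (by positivity),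
        ← ENNReal.ofReal_add (by positivity) (by norm_num)]
      congr 1
      ring
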